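/- Let A = ℤ[X,h]/(X² − Xh). Let C be the cochain complex of A-modules concentrated in homological degrees 0 and 1 with C⁰ = A ⊕ A ⊕ A and C¹ = A ⊕ A ⊕ A, whose differential is the A-linear map given, with respect to the standard bases (columns indexing the source summands, rows the target summands), by the matrix [[0, 1, X], [X−h, 2X−h, 0], [1, 0, 2X−h]]. Then C is chain homotopy equivalent (as a complex of A-modules) to the cochain complex D with D⁰ = A and D¹ = A, concentrated in degrees 0 and 1, whose differential is multiplication by h². -/

import Mathlib

open CategoryTheory MvPolynomial

/-- The Bar-Natan ring `A = ℤ[X,h]/(X² - Xh)`. -/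
abbrev BNRing : Type :=
  MvPolynomial (Fin 2) ℤ ⧸
    Ideal.span {(X 0 : MvPolynomial (Fin 2) ℤ) ^ 2 - X 0 * X 1}

/-- The class of the variable `X` in `A`. -/
noncomputable def BNX : BNRing :=
  Ideal.Quotient.mk _ (X 0)

/-- The class of the variable `h` in `A`. -/
noncomputable def BNh : BNRing :=
  Ideal.Quotient.mk _ (X 1)

/-- The zero module, used outside homological degrees `0` and `1`. -/
noncomputable def zeroMod : ModuleCat BNRing := ModuleCat.of BNRing PUnit

/-- Degree-wise objects of a cochain complex concentrated in degrees `0`, `1`. -/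
noncomputable def ttX (M N : ModuleCat BNRing) : ℤ → ModuleCat BNRing :=
  fun k => if k = 0 then M else if k = 1 then N else zeroMod

/-- The cochain complex of `A`-modules concentrated in homological degrees `0`
and `1`, with the map `f : M ⟶ N` as its only (possibly) nonzero
differential. -/
noncomputable def twoTerm (M N : ModuleCat BNRing) (f : M ⟶ N) :
    CochainComplex (ModuleCat BNRing) ℤ where
  X := ttX M N
  d i j :=
    if h : i = 0 ∧ j = 1 then
      eqToHom (show ttX M N i = M by rw [h.1]; rfl) ≫ f ≫
        eqToHom (show N = ttX M N j by rw [h.2]; rfl)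
    else 0
  shape i j hij := by
    try dsimp only
    rw [dif_neg]
    rintro ⟨rfl, rfl⟩
    exact hij (by simp)
  d_comp_d' i j k hij hjk := by
    try dsimp only
    by_cases h : i = 0 ∧ j = 1
    · rw [dif_neg (show ¬(j = 0 ∧ k = 1) by omega), Limits.comp_zero]
    · rw [dif_neg h, Limits.zero_comp]

/-- Projection on the first coordinate. -/
noncomputable def pr1 : (BNRing × BNRing × BNRing) →ₗ[BNRing] BNRing :=
  LinearMap.fst _ _ _

/-- Projection on the second coordinate. -/
noncomputable def pr2 : (BNRing × BNRing × BNRing) →ₗ[BNRing] BNRing :=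
  (LinearMap.fst BNRing BNRing BNRing).comp
    (LinearMap.snd BNRing BNRing (BNRing × BNRing))

/-- Projection on the third coordinate. -/
noncomputable def pr3 : (BNRing × BNRing × BNRing) →ₗ[BNRing] BNRing :=
  (LinearMap.snd BNRing BNRing BNRing).comp
    (LinearMap.snd BNRing BNRing (BNRing × BNRing))

/-- The `A`-linear map `A³ → A³` given by the matrix
`[[0, 1, X], [X−h, 2X−h, 0], [1, 0, 2X−h]]` (columns indexing the source
summands, rows the target summands). -/
noncomputable def dMatrix :
    (BNRing × BNRing × BNRing) →ₗ[BNRing] (BNRing × BNRing × BNRing) :=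
  LinearMap.prod (pr2 + BNX • pr3)
    (LinearMap.prod ((BNX - BNh) • pr1 + (2 * BNX - BNh) • pr2)
      (pr1 + (2 * BNX - BNh) • pr3))

/-- The cochain complex of `A`-modules concentrated in degrees `0` and `1`
with `C⁰ = A ⊕ A ⊕ A`, `C¹ = A ⊕ A ⊕ A` and differential given by the matrix
`[[0, 1, X], [X−h, 2X−h, 0], [1, 0, 2X−h]]` is chain homotopy equivalent to
the complex `A → A`, concentrated in degrees `0` and `1`, whose differential
is multiplication by `h²`. -/

lemma BNX_sq : BNX * BNX = BNX * BNh := by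
  rw [BNX, BNh, ← map_mul, ← map_mul, Ideal.Quotient.eq]
  exact Ideal.subset_span (by simp [sq])

lemma ttX_other (M N : ModuleCat BNRing) {k : ℤ} (h0 : k ≠ 0) (h1 : k ≠ 1) :
    ttX M N k = zeroMod := by
  simp [ttX, h0, h1]

lemma ttX_subsingleton (M N : ModuleCat BNRing) {k : ℤ} (h0 : k ≠ 0) (h1 : k ≠ 1) :
    Subsingleton (ttX M N k) := by
  rw [ttX_other M N h0 h1]
  exact inferInstanceAs (Subsingleton PUnit)

/-- chain map between two-term complexes from commuting square -/
noncomputable def twoTermMap {M N P Q : ModuleCat BNRing} (f : M ⟶ N) (g : P ⟶ Q)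
    (a : M ⟶ P) (b : N ⟶ Q) (hcomm : a ≫ g = f ≫ b) :
    twoTerm M N f ⟶ twoTerm P Q g where
  f k :=
    if h0 : k = 0 then
      eqToHom (show ttX M N k = M by rw [h0]; rfl) ≫ a ≫
        eqToHom (show P = ttX P Q k by rw [h0]; rfl)
    else if h1 : k = 1 then
      eqToHom (show ttX M N k = N by rw [h1]; rfl) ≫ b ≫
        eqToHom (show Q = ttX P Q k by rw [h1]; rfl)
    else 0
  comm' i j hij := by
    dsimp only [twoTerm]
    by_cases h : i = 0 ∧ j = 1
    · obtain ⟨rfl, rfl⟩ := h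
      have c01 : (0 : ℤ) = 0 ∧ (1 : ℤ) = 1 := ⟨rfl, rfl⟩
      rw [dif_pos c01, dif_pos c01, dif_pos (rfl : (0 : ℤ) = 0),
        dif_neg (by omega : ¬ (1 : ℤ) = 0)]
      erw [dif_pos (rfl : (1 : ℤ) = 1)]
      change (𝟙 M ≫ a ≫ 𝟙 P) ≫ 𝟙 P ≫ g ≫ 𝟙 Q = (𝟙 M ≫ f ≫ 𝟙 N) ≫ 𝟙 N ≫ b ≫ 𝟙 Q
      simp only [eqToHom_refl, Category.comp_id, Category.id_comp]
      simpa using hcomm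
    · rw [dif_neg h, dif_neg h, Limits.comp_zero, Limits.zero_comp]

lemma twoTermMap_f0 {M N P Q : ModuleCat BNRing} (f : M ⟶ N) (g : P ⟶ Q)
    (a : M ⟶ P) (b : N ⟶ Q) (hcomm : a ≫ g = f ≫ b) :
    (twoTermMap f g a b hcomm).f 0 = a := by
  show (eqToHom (rfl : M = M) ≫ a ≫ eqToHom (rfl : P = P)) = a
  simp

lemma twoTermMap_f1 {M N P Q : ModuleCat BNRing} (f : M ⟶ N) (g : P ⟶ Q)
    (a : M ⟶ P) (b : N ⟶ Q) (hcomm : a ≫ g = f ≫ b) :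
    (twoTermMap f g a b hcomm).f 1 = b := by
  show (eqToHom (rfl : N = N) ≫ b ≫ eqToHom (rfl : Q = Q)) = b
  simp

lemma twoTerm_d01 (M N : ModuleCat BNRing) (f : M ⟶ N) :
    (twoTerm M N f).d 0 1 = f := by
  show (eqToHom (rfl : M = M) ≫ f ≫ eqToHom (rfl : N = N)) = f
  simp

/-- The candidate homotopy data concentrated in bidegree `(1, 0)`. -/
noncomputable def ttHtp {M N : ModuleCat BNRing} (f : M ⟶ N) (K : N ⟶ M) :
    ∀ i j : ℤ, (twoTerm M N f).X i ⟶ (twoTerm M N f).X j := fun i j =>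
  if h : i = 1 ∧ j = 0 then
    eqToHom (show (twoTerm M N f).X i = N by rw [h.1]; rfl) ≫ K ≫
      eqToHom (show M = (twoTerm M N f).X j by rw [h.2]; rfl)
  else 0

lemma ttHtp_one_zero {M N : ModuleCat BNRing} (f : M ⟶ N) (K : N ⟶ M) :
    ttHtp f K 1 0 = K := by
  show (eqToHom (rfl : N = N) ≫ K ≫ eqToHom (rfl : M = M)) = K
  simp

lemma ttHtp_ne {M N : ModuleCat BNRing} (f : M ⟶ N) (K : N ⟶ M) {i j : ℤ}
    (h : ¬ (i = 1 ∧ j = 0)) : ttHtp f K i j = 0 := dif_neg h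

/-- Build a homotopy between self-maps of a two-term complex from the usual
two identities. -/
noncomputable def twoTermHomotopy {M N : ModuleCat BNRing} {f : M ⟶ N}
    (α β : twoTerm M N f ⟶ twoTerm M N f) (K : N ⟶ M)
    (e0 : α.f 0 = β.f 0 + (twoTerm M N f).d 0 1 ≫ ttHtp f K 1 0)
    (e1 : α.f 1 = β.f 1 + ttHtp f K 1 0 ≫ (twoTerm M N f).d 0 1)
    (eo : ∀ i : ℤ, i ≠ 0 → i ≠ 1 → α.f i = β.f i) :
    Homotopy α β where
  hom := ttHtp f K
  zero i j hij := by
    rw [ttHtp_ne]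
    rintro ⟨rfl, rfl⟩
    exact hij (by simp)
  comm i := by
    by_cases hi0 : i = 0
    · subst hi0
      rw [dNext_eq (ttHtp f K) (show (ComplexShape.up ℤ).Rel 0 1 by simp),
        prevD_eq (ttHtp f K) (show (ComplexShape.up ℤ).Rel (-1) 0 by simp),
        ttHtp_one_zero, ttHtp_ne f K (by omega), Limits.zero_comp, add_zero,
        e0, twoTerm_d01]
      abel
    · by_cases hi1 : i = 1
      · subst hi1
        rw [dNext_eq (ttHtp f K) (show (ComplexShape.up ℤ).Rel 1 2 by simp),
          prevD_eq (ttHtp f K) (show (ComplexShape.up ℤ).Rel 0 1 by simp),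
          ttHtp_one_zero, ttHtp_ne f K (by omega), Limits.comp_zero, zero_add,
          e1, twoTerm_d01]
        abel
      · rw [dNext_eq (ttHtp f K) (show (ComplexShape.up ℤ).Rel i (i + 1) by simp),
          prevD_eq (ttHtp f K) (show (ComplexShape.up ℤ).Rel (i - 1) i by simp),
          ttHtp_ne f K (by omega), ttHtp_ne f K (by omega), Limits.comp_zero,
          Limits.zero_comp, add_zero, zero_add, eo i hi0 hi1]

noncomputable def psi0 : (BNRing × BNRing × BNRing) →ₗ[BNRing] BNRing := -pr3

noncomputable def psi1 : (BNRing × BNRing × BNRing) →ₗ[BNRing] BNRing :=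
  (BNh - 2 * BNX) • pr1 + pr2 + (BNh - BNX) • pr3

noncomputable def phi0 : BNRing →ₗ[BNRing] BNRing × BNRing × BNRing :=
  LinearMap.prod ((2 * BNX - BNh) • LinearMap.id)
    (LinearMap.prod (BNX • LinearMap.id) (-LinearMap.id))

noncomputable def phi1 : BNRing →ₗ[BNRing] BNRing × BNRing × BNRing :=
  LinearMap.prod 0 (LinearMap.prod LinearMap.id 0)

noncomputable def Kmap :
    (BNRing × BNRing × BNRing) →ₗ[BNRing] BNRing × BNRing × BNRing :=
  LinearMap.prod (-pr3) (LinearMap.prod (-pr1) 0)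

lemma sq_psi : (LinearMap.mulLeft BNRing (BNh ^ 2)).comp psi0 =
    psi1.comp dMatrix := by
  refine LinearMap.ext fun ⟨w1, w2, w3⟩ => ?_
  simp [psi0, psi1, dMatrix, pr1, pr2, pr3, smul_eq_mul]
  linear_combination (4 * w3) * BNX_sq

lemma sq_phi : dMatrix.comp phi0 =
    phi1.comp (LinearMap.mulLeft BNRing (BNh ^ 2)) := by
  refine LinearMap.ext fun a => ?_
  simp [phi0, phi1, dMatrix, pr1, pr2, pr3, smul_eq_mul, Prod.ext_iff]
  exact ⟨by ring, by linear_combination (4 * a) * BNX_sq, by ring⟩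

lemma htp0 : phi0.comp psi0 = LinearMap.id + Kmap.comp dMatrix := by
  refine LinearMap.ext fun ⟨w1, w2, w3⟩ => ?_
  simp [phi0, psi0, Kmap, dMatrix, pr1, pr2, pr3, smul_eq_mul, Prod.ext_iff]

lemma htp1 : phi1.comp psi1 = LinearMap.id + dMatrix.comp Kmap := by
  refine LinearMap.ext fun ⟨w1, w2, w3⟩ => ?_
  simp [phi1, psi1, Kmap, dMatrix, pr1, pr2, pr3, smul_eq_mul, Prod.ext_iff]
  ring

lemma inv0 : psi0.comp phi0 = LinearMap.id := by
  refine LinearMap.ext fun a => ?_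
  simp [psi0, phi0, pr1, pr2, pr3, smul_eq_mul]

lemma inv1 : psi1.comp phi1 = LinearMap.id := by
  refine LinearMap.ext fun a => ?_
  simp [psi1, phi1, pr1, pr2, pr3, smul_eq_mul]

theorem matrix_complex_homotopyEquiv_A2 :
    Nonempty (HomotopyEquiv
      (twoTerm (ModuleCat.of BNRing (BNRing × BNRing × BNRing))
        (ModuleCat.of BNRing (BNRing × BNRing × BNRing))
        (ModuleCat.ofHom dMatrix))
      (twoTerm (ModuleCat.of BNRing BNRing) (ModuleCat.of BNRing BNRing)
        (ModuleCat.ofHom (LinearMap.mulLeft BNRing (BNh ^ 2))))) := by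
  refine ⟨{
    hom := twoTermMap _ _ (ModuleCat.ofHom psi0) (ModuleCat.ofHom psi1) (congrArg ModuleCat.ofHom sq_psi)
    inv := twoTermMap _ _ (ModuleCat.ofHom phi0) (ModuleCat.ofHom phi1) (congrArg ModuleCat.ofHom sq_phi)
    homotopyHomInvId := twoTermHomotopy _ _ (ModuleCat.ofHom Kmap) ?_ ?_ ?_
    homotopyInvHomId := Homotopy.ofEq ?_ }⟩
  · rw [HomologicalComplex.comp_f, twoTermMap_f0, twoTermMap_f0,
      HomologicalComplex.id_f, twoTerm_d01, ttHtp_one_zero]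
    exact ModuleCat.hom_ext htp0
  · rw [HomologicalComplex.comp_f, twoTermMap_f1, twoTermMap_f1,
      HomologicalComplex.id_f, twoTerm_d01, ttHtp_one_zero]
    exact ModuleCat.hom_ext htp1
  · intro i h0 h1
    rw [HomologicalComplex.comp_f, HomologicalComplex.id_f]
    exact ModuleCat.hom_ext <| LinearMap.ext fun x =>
      @Subsingleton.elim _ (ttX_subsingleton _ _ h0 h1) _ _
  · refine HomologicalComplex.hom_ext _ _ fun i => ?_
    by_cases h0 : i = 0
    · subst h0
      rw [HomologicalComplex.comp_f, twoTermMap_f0, twoTermMap_f0,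
        HomologicalComplex.id_f]
      exact ModuleCat.hom_ext inv0
    · by_cases h1 : i = 1
      · subst h1
        rw [HomologicalComplex.comp_f, twoTermMap_f1, twoTermMap_f1,
          HomologicalComplex.id_f]
        exact ModuleCat.hom_ext inv1
      · rw [HomologicalComplex.comp_f, HomologicalComplex.id_f]
        exact ModuleCat.hom_ext <| LinearMap.ext fun x =>
          @Subsingleton.elim _ (ttX_subsingleton _ _ h0 h1) _ _
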